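/- Let p₀ be a subharmonic projection for the predual semigroup T_{t*} (i.e. states supported in range(p₀) stay supported there). Then for every state ρ and every t ≥ 0, p₀^⊥ T_{t*}(p₀^⊥ ρ p₀^⊥) p₀^⊥ = p₀^⊥ T_{t*}(ρ') p₀^⊥ for ρ' = p₀^⊥ ρ p₀^⊥; in particular the maps S_t(x) := p₀^⊥ T_{t*}(x) p₀^⊥ on the corner p₀^⊥ L¹(h) p₀^⊥ form a semigroup: S_{t+s} = S_t ∘ S_s. -/

import Mathlib

open Matrix
open scoped ComplexOrder

/-- A linear map on matrices is completely positive if all of its matrix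
amplifications preserve positive semidefiniteness. -/
def IsCompletelyPositive {ι : Type*} [Fintype ι] [DecidableEq ι]
    (Φ : Matrix ι ι ℂ →ₗ[ℂ] Matrix ι ι ℂ) : Prop :=
  ∀ (k : ℕ) (M : Matrix (Fin k × ι) (Fin k × ι) ℂ), M.PosSemidef →
    (Matrix.of fun (p q : Fin k × ι) =>
      Φ (Matrix.of fun a b => M (p.1, a) (q.1, b)) p.2 q.2).PosSemidef

section CornerAux
variable {ι : Type*} [Fintype ι] [DecidableEq ι]

/-- A complex matrix with vanishing quadratic form is zero. -/
lemma aux_quad_zero (E : Matrix ι ι ℂ) (h : ∀ x : ι → ℂ, star x ⬝ᵥ E *ᵥ x = 0) :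
    E = 0 := by
  have hb : ∀ x y : ι → ℂ, star x ⬝ᵥ E *ᵥ y = 0 := by
    have h2 : ∀ x y : ι → ℂ, star x ⬝ᵥ E *ᵥ y + star y ⬝ᵥ E *ᵥ x = 0 := by
      intro x y
      have h0 := h (x + y)
      simp only [star_add, mulVec_add, add_dotProduct, dotProduct_add] at h0
      linear_combination h0 - h x - h y
    intro x y
    have h3 := h2 x (Complex.I • y)
    simp only [star_smul, mulVec_smul, dotProduct_smul, smul_dotProduct, smul_eq_mul,
      Complex.star_def, Complex.conj_I] at h3
    have h4 : Complex.I * (star x ⬝ᵥ E *ᵥ y - star y ⬝ᵥ E *ᵥ x) = 0 := by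
      linear_combination h3
    have h5 := (mul_eq_zero.mp h4).resolve_left Complex.I_ne_zero
    linear_combination (h2 x y) / 2 + h5 / 2
  ext i j
  have := hb (Pi.single i 1) (Pi.single j 1)
  rw [show (star (Pi.single i 1) : ι → ℂ) = Pi.single i 1 by
    rw [← Pi.single_star]; simp] at this
  simpa [single_dotProduct] using this


/-- A completely positive map is positive. -/
lemma aux_pos (Φ : Matrix ι ι ℂ →ₗ[ℂ] Matrix ι ι ℂ) (hΦ : IsCompletelyPositive Φ)
    {ρ : Matrix ι ι ℂ} (hρ : ρ.PosSemidef) : (Φ ρ).PosSemidef := by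
  have h1 := hΦ 1 (ρ.submatrix Prod.snd Prod.snd) (hρ.submatrix _)
  have he : (Matrix.of fun (p q : Fin 1 × ι) =>
      Φ (Matrix.of fun a b => (ρ.submatrix Prod.snd Prod.snd) (p.1, a) (q.1, b)) p.2 q.2)
      = (Φ ρ).submatrix Prod.snd Prod.snd := rfl
  rw [he] at h1
  have h2 := h1.submatrix (fun i : ι => ((0 : Fin 1), i))
  simpa using h2

/-- Any Hermitian matrix becomes PSD after adding a large multiple of the identity. -/
lemma aux_shift (H : Matrix ι ι ℂ) (hH : H.IsHermitian) :
    ∃ c : ℝ, (H + (c : ℂ) • 1).PosSemidef := by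
  classical
  refine ⟨∑ j, |hH.eigenvalues j|, ?_⟩
  set c : ℝ := ∑ j, |hH.eigenvalues j| with hc
  set U : Matrix ι ι ℂ := (hH.eigenvectorUnitary : Matrix ι ι ℂ) with hU
  have hUU : U * star U = 1 := (Matrix.mem_unitaryGroup_iff).mp hH.eigenvectorUnitary.2
  have hdiag : H + (c : ℂ) • 1 =
      U * diagonal (fun j => ((hH.eigenvalues j + c : ℝ) : ℂ)) * star U := by
    have h1 : diagonal (fun j => ((hH.eigenvalues j + c : ℝ) : ℂ))
        = diagonal (RCLike.ofReal ∘ hH.eigenvalues) + (c : ℂ) • 1 := by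
      ext i j
      by_cases hij : i = j <;>
        simp [hij, diagonal, one_apply, Complex.ofReal_add]
    rw [h1, mul_add, add_mul, ← show H = U * diagonal (RCLike.ofReal ∘ hH.eigenvalues) * star U from
      hH.spectral_theorem]
    congr 1
    rw [mul_smul_comm, smul_mul_assoc, mul_one, hUU]
  rw [hdiag]
  have hd : (diagonal (fun j => ((hH.eigenvalues j + c : ℝ) : ℂ))).PosSemidef := by
    refine posSemidef_diagonal_iff.mpr fun i => ?_
    rw [Complex.zero_le_real]
    have h2 : |hH.eigenvalues i| ≤ c :=
      Finset.single_le_sum (f := fun j => |hH.eigenvalues j|)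
        (fun j _ => abs_nonneg _) (Finset.mem_univ i)
    have := neg_abs_le (hH.eigenvalues i)
    linarith
  have := hd.mul_mul_conjTranspose_same U
  rwa [← Matrix.star_eq_conjTranspose] at this

/-- A linear map vanishing on PSD matrices vanishes. -/
lemma aux_span_psd (Ψ : Matrix ι ι ℂ →ₗ[ℂ] Matrix ι ι ℂ)
    (h : ∀ ρ : Matrix ι ι ℂ, ρ.PosSemidef → Ψ ρ = 0) (ρ : Matrix ι ι ℂ) : Ψ ρ = 0 := by
  have hherm : ∀ σ : Matrix ι ι ℂ, σ.IsHermitian → Ψ σ = 0 := by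
    intro σ hσ
    obtain ⟨c, hcpos⟩ := aux_shift σ hσ
    have h1 := h _ hcpos
    rw [map_add, _root_.map_smul, h 1 Matrix.PosSemidef.one, smul_zero, add_zero] at h1
    exact h1
  have hH : ((1 / 2 : ℂ) • (ρ + ρᴴ)).IsHermitian := by
    unfold Matrix.IsHermitian
    rw [conjTranspose_smul, conjTranspose_add, conjTranspose_conjTranspose]
    rw [show star (1 / 2 : ℂ) = 1 / 2 by norm_num [Complex.star_def, Complex.ext_iff]]
    rw [add_comm]
  have hK : ((-Complex.I / 2) • (ρ - ρᴴ)).IsHermitian := by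
    unfold Matrix.IsHermitian
    rw [conjTranspose_smul, conjTranspose_sub, conjTranspose_conjTranspose]
    rw [show star (-Complex.I / 2 : ℂ) = Complex.I / 2 by
      simp [Complex.star_def, Complex.ext_iff]]
    rw [show (ρᴴ - ρ) = -(ρ - ρᴴ) by abel]
    rw [smul_neg, ← neg_smul]
    congr 1
    ring
  have hdecomp : ρ = (1 / 2 : ℂ) • (ρ + ρᴴ)
      + Complex.I • ((-Complex.I / 2) • (ρ - ρᴴ)) := by
    rw [smul_smul, show Complex.I * (-Complex.I / 2) = 1 / 2 by
      linear_combination (-1 / 2 : ℂ) * Complex.I_mul_I]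
    module
  rw [hdecomp, map_add, hherm _ hH, _root_.map_smul, hherm _ hK, smul_zero, zero_add]

end CornerAux

/-- If `p₀` is subharmonic for the predual semigroup `T_{t*}` (states supported
in `range p₀` stay supported there), then for every state `ρ` and `t ≥ 0`,
`p₀^⊥ T_{t*}(p₀^⊥ ρ p₀^⊥) p₀^⊥ = p₀^⊥ T_{t*}(ρ) p₀^⊥`; in particular the maps
`S_t(x) = p₀^⊥ T_{t*}(x) p₀^⊥` form a semigroup on the corner. -/
theorem corner_semigroup {ι : Type*} [Fintype ι] [DecidableEq ι]
    (T : ℝ → Matrix ι ι ℂ →ₗ[ℂ] Matrix ι ι ℂ)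
    (hT0 : T 0 = LinearMap.id)
    (hsem : ∀ t, 0 ≤ t → ∀ s, 0 ≤ s → T (t + s) = (T t).comp (T s))
    (hTP : ∀ t, 0 ≤ t → ∀ x : Matrix ι ι ℂ, (T t x).trace = x.trace)
    (hCP : ∀ t, 0 ≤ t → IsCompletelyPositive (T t))
    (p₀ : Matrix ι ι ℂ) (hproj : p₀ * p₀ = p₀) (hherm : p₀.IsHermitian)
    -- `p₀` is subharmonic: states supported in the range of `p₀` stay there
    (hsub : ∀ t, 0 ≤ t → ∀ ρ : Matrix ι ι ℂ, p₀ * ρ * p₀ = ρ →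
      p₀ * T t ρ * p₀ = T t ρ) :
    -- the corner compression only sees `p₀^⊥ ρ p₀^⊥`
    (∀ t, 0 ≤ t → ∀ ρ : Matrix ι ι ℂ, ρ.PosSemidef → ρ.trace = 1 →
      (1 - p₀) * T t ((1 - p₀) * ρ * (1 - p₀)) * (1 - p₀) =
        (1 - p₀) * T t ρ * (1 - p₀)) ∧
    -- semigroup property of `S_t(x) = p₀^⊥ T_t(x) p₀^⊥` on the corner
    (∀ t, 0 ≤ t → ∀ s, 0 ≤ s → ∀ x : Matrix ι ι ℂ,
      (1 - p₀) * x * (1 - p₀) = x →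
      (1 - p₀) * T (t + s) x * (1 - p₀) =
        (1 - p₀) * T t ((1 - p₀) * T s x * (1 - p₀)) * (1 - p₀)) := by
  
  set q : Matrix ι ι ℂ := 1 - p₀ with hqdef
  have hqp : q * p₀ = 0 := by rw [hqdef, sub_mul, one_mul, hproj, sub_self]
  have hpq : p₀ * q = 0 := by rw [hqdef, mul_sub, mul_one, hproj, sub_self]
  have hqq : q * q = q := by rw [hqdef, sub_mul, one_mul]; rw [hpq, sub_zero]
  have hqH : qᴴ = q := by
    rw [hqdef, conjTranspose_sub, conjTranspose_one, hherm.eq]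
  -- the `p₀ ρ p₀` corner is killed by the compression
  have hP0 : ∀ t, 0 ≤ t → ∀ ρ : Matrix ι ι ℂ, q * T t (p₀ * ρ * p₀) * q = 0 := by
    intro t ht ρ
    have h1 : p₀ * (p₀ * ρ * p₀) * p₀ = p₀ * ρ * p₀ := by
      have : p₀ * (p₀ * ρ * p₀) * p₀ = (p₀ * p₀) * ρ * (p₀ * p₀) := by
        simp only [mul_assoc]
      rw [this, hproj]
    have h2 := hsub t ht (p₀ * ρ * p₀) h1
    calc q * T t (p₀ * ρ * p₀) * q
        = q * (p₀ * T t (p₀ * ρ * p₀) * p₀) * q := by rw [h2]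
      _ = (q * p₀) * T t (p₀ * ρ * p₀) * (p₀ * q) := by simp only [mul_assoc]
      _ = 0 := by rw [hqp, hpq, zero_mul, mul_zero]
  -- cross terms are killed for PSD states
  have hcross : ∀ t, 0 ≤ t → ∀ ρ : Matrix ι ι ℂ, ρ.PosSemidef →
      q * T t (q * ρ * p₀ + p₀ * ρ * q) * q = 0 := by
    intro t ht ρ hρ
    set E : Matrix ι ι ℂ := q * T t (q * ρ * p₀ + p₀ * ρ * q) * q with hE
    set A : Matrix ι ι ℂ := q * T t (q * ρ * q) * q with hA
    have hAE : ∀ lam : ℝ, (A + (lam : ℂ) • E).PosSemidef := by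
      intro lam
      set u : Matrix ι ι ℂ := q + (lam : ℂ) • p₀ with hu
      have huH : uᴴ = u := by
        rw [hu, conjTranspose_add, conjTranspose_smul, hqH, hherm.eq, Complex.star_def,
          Complex.conj_ofReal]
      have hpos : (u * ρ * u).PosSemidef := by
        have h := hρ.mul_mul_conjTranspose_same u
        rwa [huH] at h
      have hpos2 := (aux_pos _ (hCP t ht) hpos).mul_mul_conjTranspose_same q
      rw [hqH] at hpos2
      have hexp : u * ρ * u = (q * ρ * q + ((lam : ℂ) * (lam : ℂ)) • (p₀ * ρ * p₀))
          + (lam : ℂ) • (q * ρ * p₀ + p₀ * ρ * q) := by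
        rw [hu]
        simp only [add_mul, mul_add, smul_mul_assoc, mul_smul_comm, smul_smul, smul_add]
        abel
      have : q * T t (u * ρ * u) * q = A + (lam : ℂ) • E := by
        rw [hexp, map_add, map_add, _root_.map_smul, _root_.map_smul]
        simp only [mul_add, add_mul, mul_smul_comm, smul_mul_assoc]
        rw [← hA, ← hE, hP0 t ht ρ, smul_zero, add_zero]
      rwa [this] at hpos2
    -- conclude E = 0 from the one-parameter family of PSD matrices
    have hE0 : E = 0 := by
      apply aux_quad_zero
      intro x
      have hforms : ∀ lam : ℝ, 0 ≤ star x ⬝ᵥ A *ᵥ x + (lam : ℂ) * (star x ⬝ᵥ E *ᵥ x) := by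
        intro lam
        have := (hAE lam).dotProduct_mulVec_nonneg x
        simpa [add_mulVec, dotProduct_add, smul_mulVec, smul_eq_mul] using this
      set a : ℂ := star x ⬝ᵥ A *ᵥ x
      set b : ℂ := star x ⬝ᵥ E *ᵥ x
      have him : ∀ lam : ℝ, (a + (lam : ℂ) * b).im = 0 ∧ 0 ≤ (a + (lam : ℂ) * b).re := by
        intro lam
        have := hforms lam
        rw [Complex.le_def] at this
        exact ⟨this.2.symm, by simpa using this.1⟩
      have haim : a.im = 0 := by simpa using (him 0).1
      have hbim : b.im = 0 := by
        have h1 := (him 1).1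
        simp only [Complex.add_im, Complex.mul_im, Complex.ofReal_re, Complex.ofReal_im,
          one_mul, zero_mul, add_zero, Complex.ofReal_one] at h1
        rw [haim] at h1; linarith
      have hbre : b.re = 0 := by
        by_contra hb
        have h2 := (him (-(a.re + 1) / b.re)).2
        simp only [Complex.add_re, Complex.mul_re, Complex.ofReal_re, Complex.ofReal_im,
          zero_mul, sub_zero] at h2
        rw [div_mul_cancel₀ _ hb] at h2
        linarith
      exact Complex.ext hbre hbim
    exact hE0
  -- the key identity, for all matrices
  have hstar : ∀ t, 0 ≤ t → ∀ ρ : Matrix ι ι ℂ,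
      q * T t (q * ρ * q) * q = q * T t ρ * q := by
    intro t ht
    set L : Matrix ι ι ℂ →ₗ[ℂ] Matrix ι ι ℂ :=
      { toFun := fun ρ => q * T t (q * ρ * q) * q - q * T t ρ * q
        map_add' := by
          intro x y
          simp only [mul_add, add_mul, map_add]
          abel
        map_smul' := by
          intro c x
          simp only [mul_smul_comm, smul_mul_assoc, _root_.map_smul, RingHom.id_apply,
            smul_sub] } with hL
    have hpsd : ∀ ρ : Matrix ι ι ℂ, ρ.PosSemidef → L ρ = 0 := by
      intro ρ hρ
      have hdec : ρ = q * ρ * q + (q * ρ * p₀ + p₀ * ρ * q) + p₀ * ρ * p₀ := by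
        have hone : q + p₀ = 1 := by rw [hqdef]; abel
        calc ρ = (q + p₀) * ρ * (q + p₀) := by rw [hone, one_mul, mul_one]
          _ = q * ρ * q + (q * ρ * p₀ + p₀ * ρ * q) + p₀ * ρ * p₀ := by
              simp only [add_mul, mul_add]; abel
      have h1 : T t ρ = T t (q * ρ * q) + T t (q * ρ * p₀ + p₀ * ρ * q)
          + T t (p₀ * ρ * p₀) := by
        conv_lhs => rw [hdec]
        rw [map_add, map_add]
      have h2 : q * T t ρ * q = q * T t (q * ρ * q) * q := by
        rw [h1]
        simp only [mul_add, add_mul]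
        rw [hcross t ht ρ hρ, hP0 t ht ρ, add_zero, add_zero]
      show q * T t (q * ρ * q) * q - q * T t ρ * q = 0
      rw [h2, sub_self]
    intro ρ
    have := aux_span_psd L hpsd ρ
    have h := sub_eq_zero.mp this
    exact h
  refine ⟨fun t ht ρ hρ _ => hstar t ht ρ, fun t ht s hs x _ => ?_⟩
  rw [hsem t ht s hs, LinearMap.comp_apply]
  exact (hstar t ht (T s x)).symm
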